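/- Let G be a C¹ Orlicz function satisfying the Δ₂-condition with constant K > 2 and the growth bound g(a)·a ≤ p·G(a) for some p > 1 (g = G'). Then there is a constant C > 0 such that for every ε ∈ (0,1) and all s, t ≥ 0: g(2s + t)·t ≤ (C·K²/2)·(ε·G(s) + 2·G(t/ε)). -/
import Mathlib
open Topology Filter


theorem orlicz_combined_estimate (G g : ℝ → ℝ) (K p : ℝ)
    (hcont : ContinuousOn G (Set.Ici 0))
    (hconv : ConvexOn ℝ (Set.Ici 0) G)
    (hmono : MonotoneOn G (Set.Ici 0))
    (hG0 : G 0 = 0)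
    (hderiv : ∀ t : ℝ, 0 < t → HasDerivAt G (g t) t)
    (hK : 2 < K)
    (hΔ2 : ∀ x : ℝ, 0 ≤ x → G (2 * x) ≤ K * G x)
    (hp : 1 < p)
    (hgrowth : ∀ a : ℝ, 0 < a → g a * a ≤ p * G a) :
    ∃ C : ℝ, 0 < C ∧ ∀ ε : ℝ, ε ∈ Set.Ioo (0:ℝ) 1 → ∀ s t : ℝ, 0 ≤ s → 0 ≤ t →
      g (2 * s + t) * t ≤ C * K ^ 2 / 2 * (ε * G s + 2 * G (t / ε)) := by
  have hK0 : (0:ℝ) < K := by linarith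
  have hGnonneg : ∀ x : ℝ, 0 ≤ x → 0 ≤ G x := by
    intro x hx
    have := hmono Set.self_mem_Ici hx hx
    simpa [hG0] using this
  have hG4 : ∀ x : ℝ, 0 ≤ x → G (4 * x) ≤ K ^ 2 * G x := by
    intro x hx
    have h1 : G (2 * (2 * x)) ≤ K * G (2 * x) := hΔ2 (2 * x) (by linarith)
    have h2 : G (2 * x) ≤ K * G x := hΔ2 x hx
    have : G (4 * x) ≤ K * (K * G x) := by
      calc G (4 * x) = G (2 * (2 * x)) := by ring_nf
        _ ≤ K * G (2 * x) := h1
        _ ≤ K * (K * G x) := by nlinarith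
    nlinarith
  have hgnonneg : ∀ a : ℝ, 0 < a → 0 ≤ g a := by
    intro a ha
    have h1 : Filter.Tendsto (slope G a) (𝓝[>] a) (𝓝 (g a)) :=
      (hasDerivAt_iff_tendsto_slope.mp (hderiv a ha)).mono_left
        (nhdsWithin_mono a (fun y hy => ne_of_gt hy))
    refine ge_of_tendsto h1 ?_
    filter_upwards [self_mem_nhdsWithin] with y hy
    have hay : a < y := hy
    have hGa : G a ≤ G y := hmono (le_of_lt ha) (le_of_lt (ha.trans hay)) hay.le
    have : 0 ≤ (G y - G a) / (y - a) := div_nonneg (by linarith) (by linarith)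
    simpa [slope_def_field, div_eq_inv_mul] using this
  refine ⟨2 * p, by linarith, ?_⟩
  rintro ε ⟨hε0, hε1⟩ s t hs ht
  rcases eq_or_lt_of_le ht with rfl | ht0
  · have h1 : 0 ≤ ε * G s := mul_nonneg hε0.le (hGnonneg s hs)
    have h2 : G ((0:ℝ) / ε) = 0 := by simp [hG0]
    rw [h2, mul_zero]
    have hpk : (0:ℝ) ≤ 2 * p * K ^ 2 / 2 := by positivity
    nlinarith [mul_nonneg hpk h1]
  · set a := 2 * s + t with ha_def
    have ha : 0 < a := by positivity
    have hga : 0 ≤ g a := hgnonneg a ha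
    have hgr : g a * a ≤ p * G a := hgrowth a ha
    have htε : 0 ≤ t / ε := div_nonneg ht hε0.le
    have hGtε : 0 ≤ G (t / ε) := hGnonneg _ htε
    by_cases hcase : t ≤ ε * s
    · -- then t ≤ s, a ≤ 4s
      have hs0 : 0 < s := by nlinarith
      have hts : t ≤ s := by nlinarith
      have ha4s : a ≤ 4 * s := by simp only [ha_def]; linarith
      have hGa4 : G a ≤ G (4 * s) := hmono ha.le (by positivity : (0:ℝ) ≤ 4 * s) ha4s
      have hGK : G (4 * s) ≤ K ^ 2 * G s := hG4 s hs
      have hta : t ≤ ε * a := by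
        have : ε * s ≤ ε * a := by
          apply mul_le_mul_of_nonneg_left _ hε0.le
          simp only [ha_def]; linarith
        linarith
      have key : g a * t ≤ ε * (p * (K ^ 2 * G s)) := by
        calc g a * t ≤ g a * (ε * a) := mul_le_mul_of_nonneg_left hta hga
          _ = ε * (g a * a) := by ring
          _ ≤ ε * (p * G a) := by
              have := mul_le_mul_of_nonneg_left hgr hε0.le
              linarith
          _ ≤ ε * (p * (K ^ 2 * G s)) := by
              have h := mul_le_mul_of_nonneg_left
                (show G a ≤ K ^ 2 * G s by linarith) (show (0:ℝ) ≤ ε * p by positivity)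
              linear_combination h
      nlinarith [mul_nonneg (show (0:ℝ) ≤ 2 * p * K ^ 2 by positivity) hGtε]
    · push_neg at hcase
      have hsle : s ≤ t / ε := by
        rw [le_div_iff₀ hε0]; nlinarith
      have htle : t ≤ t / ε := by
        rw [le_div_iff₀ hε0]; nlinarith
      have ha4 : a ≤ 4 * (t / ε) := by simp only [ha_def]; linarith
      have hGa4 : G a ≤ G (4 * (t / ε)) := hmono ha.le (Set.mem_Ici.mpr (by positivity)) ha4
      have hGK : G (4 * (t / ε)) ≤ K ^ 2 * G (t / ε) := hG4 _ htε
      have key : g a * t ≤ p * (K ^ 2 * G (t / ε)) := by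
        calc g a * t ≤ g a * a := mul_le_mul_of_nonneg_left (by simp only [ha_def]; linarith) hga
          _ ≤ p * G a := hgr
          _ ≤ p * (K ^ 2 * G (t / ε)) := by nlinarith
      have hεGs : 0 ≤ ε * G s := mul_nonneg hε0.le (hGnonneg s hs)
      nlinarith [mul_nonneg (show (0:ℝ) ≤ p * K ^ 2 by positivity) hεGs,
        mul_nonneg (show (0:ℝ) ≤ p * K ^ 2 by positivity) hGtε]
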